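/- For every μ > 0, the function x ↦ F(μ, x) is strictly decreasing and strictly convex on (0, ∞): its first derivative in x is strictly negative and its second derivative in x is strictly positive for all x > 0. -/

import Mathlib

/-- `F(μ, x) = (1 + μ/x²)/(1 + μx)`. -/
noncomputable def F (μ x : ℝ) : ℝ := (1 + μ / x ^ 2) / (1 + μ * x)

/-- For every `μ > 0`, `x ↦ F(μ, x)` is strictly decreasing and strictly convex
on `(0, ∞)`: its first derivative is strictly negative and its second
derivative is strictly positive for all `x > 0`. -/
theorem F_strictAnti_strictConvex (μ : ℝ) (hμ : 0 < μ) :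
    StrictAntiOn (F μ) (Set.Ioi 0) ∧
      StrictConvexOn ℝ (Set.Ioi 0) (F μ) ∧
      ∀ x : ℝ, 0 < x → deriv (F μ) x < 0 ∧ 0 < deriv (deriv (F μ)) x := by
  set f' : ℝ → ℝ := fun x =>
      ((-2 * μ / x ^ 3) * (1 + μ * x) - (1 + μ / x ^ 2) * μ) / (1 + μ * x) ^ 2 with hf'def
  -- first derivative
  have hN : ∀ x : ℝ, 0 < x → HasDerivAt (fun y : ℝ => 1 + μ / y ^ 2) (-2 * μ / x ^ 3) x := by
    intro x hx
    have hp : HasDerivAt (fun y : ℝ => y ^ 2) (2 * x) x := by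
      simpa using hasDerivAt_pow 2 x
    have h := (hasDerivAt_const x (1 : ℝ)).add ((hasDerivAt_const x μ).div hp (by positivity))
    refine h.congr_deriv ?_
    field_simp
    ring
  have hD : ∀ x : ℝ, 0 < x → HasDerivAt (fun y : ℝ => 1 + μ * y) μ x := by
    intro x hx
    simpa using (hasDerivAt_id x).const_mul μ
  have hDne : ∀ x : ℝ, 0 < x → (1 + μ * x) ≠ 0 := fun x hx => by positivity
  have key : ∀ x : ℝ, 0 < x → HasDerivAt (F μ) (f' x) x := by
    intro x hx
    have h := (hN x hx).div (hD x hx) (hDne x hx)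
    exact h
  -- f' is negative
  have hf'neg : ∀ x : ℝ, 0 < x → f' x < 0 := by
    intro x hx
    apply div_neg_of_neg_of_pos
    · have h1 : (-2 * μ / x ^ 3) * (1 + μ * x) < 0 := by
        apply mul_neg_of_neg_of_pos
        · have h0 : (0:ℝ) < 2 * μ / x ^ 3 := by positivity
          have he : -2 * μ / x ^ 3 = -(2 * μ / x ^ 3) := by ring
          rw [he]; linarith
        · positivity
      have h2 : (0:ℝ) < (1 + μ / x ^ 2) * μ := by positivity
      linarith
    · positivity
  -- second derivative of F = derivative of f'
  set f'' : ℝ → ℝ := fun x =>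
      (((6 * μ / x ^ 4) * (1 + μ * x) + (-2 * μ / x ^ 3) * μ - (-2 * μ / x ^ 3) * μ) *
          (1 + μ * x) ^ 2 -
        ((-2 * μ / x ^ 3) * (1 + μ * x) - (1 + μ / x ^ 2) * μ) *
          (2 * (1 + μ * x) ^ 1 * μ)) / ((1 + μ * x) ^ 2) ^ 2 with hf''def
  have key2 : ∀ x : ℝ, 0 < x → HasDerivAt f' (f'' x) x := by
    intro x hx
    have hA : HasDerivAt (fun y : ℝ => -2 * μ / y ^ 3) (6 * μ / x ^ 4) x := by
      have hp : HasDerivAt (fun y : ℝ => y ^ 3) (3 * x ^ 2) x := by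
        simpa using hasDerivAt_pow 3 x
      have h := (hasDerivAt_const x (-2 * μ)).div hp (by positivity)
      refine h.congr_deriv ?_
      field_simp
      ring
    have hU : HasDerivAt
        (fun y : ℝ => (-2 * μ / y ^ 3) * (1 + μ * y) - (1 + μ / y ^ 2) * μ)
        ((6 * μ / x ^ 4) * (1 + μ * x) + (-2 * μ / x ^ 3) * μ - (-2 * μ / x ^ 3) * μ) x :=
      (hA.mul (hD x hx)).sub ((hN x hx).mul_const μ)
    have hV : HasDerivAt (fun y : ℝ => (1 + μ * y) ^ 2) (2 * (1 + μ * x) ^ 1 * μ) x := by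
      simpa using (hD x hx).fun_pow 2
    exact hU.div hV (by positivity)
  -- f'' is positive
  have hf''pos : ∀ x : ℝ, 0 < x → 0 < f'' x := by
    intro x hx
    apply div_pos
    · have hu' : (0:ℝ) <
          (6 * μ / x ^ 4) * (1 + μ * x) + (-2 * μ / x ^ 3) * μ - (-2 * μ / x ^ 3) * μ := by
        have : (0:ℝ) < (6 * μ / x ^ 4) * (1 + μ * x) := by positivity
        linarith
      have hu : ((-2 * μ / x ^ 3) * (1 + μ * x) - (1 + μ / x ^ 2) * μ) < 0 := by
        have h1 : (-2 * μ / x ^ 3) * (1 + μ * x) < 0 := by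
          apply mul_neg_of_neg_of_pos
          · have h0 : (0:ℝ) < 2 * μ / x ^ 3 := by positivity
            have he : -2 * μ / x ^ 3 = -(2 * μ / x ^ 3) := by ring
            rw [he]; linarith
          · positivity
        have h2 : (0:ℝ) < (1 + μ / x ^ 2) * μ := by positivity
        linarith
      have hv : (0:ℝ) < (1 + μ * x) ^ 2 := by positivity
      have hv' : (0:ℝ) < 2 * (1 + μ * x) ^ 1 * μ := by positivity
      nlinarith
    · positivity
  -- identify derivatives
  have hderiv1 : ∀ x : ℝ, 0 < x → deriv (F μ) x = f' x := fun x hx => (key x hx).deriv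
  have hderiv2 : ∀ x : ℝ, 0 < x → deriv (deriv (F μ)) x = f'' x := by
    intro x hx
    have hev : deriv (F μ) =ᶠ[nhds x] f' :=
      Filter.eventuallyEq_of_mem (isOpen_Ioi.mem_nhds hx) fun y hy => hderiv1 y hy
    rw [hev.deriv_eq]
    exact (key2 x hx).deriv
  have hcont : ContinuousOn (F μ) (Set.Ioi 0) := fun x hx =>
    ((key x hx).continuousAt).continuousWithinAt
  have hlast : ∀ x : ℝ, 0 < x → deriv (F μ) x < 0 ∧ 0 < deriv (deriv (F μ)) x := by
    intro x hx
    refine ⟨?_, ?_⟩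
    · rw [hderiv1 x hx]; exact hf'neg x hx
    · rw [hderiv2 x hx]; exact hf''pos x hx
  refine ⟨?_, ?_, hlast⟩
  · apply strictAntiOn_of_deriv_neg (convex_Ioi 0) hcont
    intro x hx
    rw [interior_Ioi] at hx
    exact (hlast x hx).1
  · apply strictConvexOn_of_deriv2_pos (convex_Ioi 0) hcont
    intro x hx
    rw [interior_Ioi] at hx
    exact (hlast x hx).2
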